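/- In the Section-4 construction, for all integers 1 ≤ k′ < k, all i ∈ {1,2,3} and all 1 ≤ l ≤ N, the word y_{(i,l)}^k can be written as a concatenation y_{(i,l)}^k = ∏_{j=1}^m y_{(i_j,l_j)}^{k′} for some integer m ≥ 2 and indices (i_j, l_j) such that: (1) i_1 ≠ i_2 and i_{m−1} ≠ i_m; and (2) whenever i_j = i_{j+1}, one has i_{j−1} ≠ i_j and i_{j+2} ≠ i_{j+1}. -/

import Mathlib

namespace SmallCancel

/-- A word over `S`: a finite sequence of letters from the symmetrized alphabet
`S ∪ S⁻¹`, encoded as pairs `(s, b)` where `b = true` denotes the letter `s`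
and `b = false` denotes its formal inverse `s⁻¹`. -/
abbrev Word (S : Type) := List (S × Bool)

/-- The formal inverse of a word. -/
def wInv {S : Type} (w : Word S) : Word S := (w.map fun a => (a.1, !a.2)).reverse

/-- A word is reduced if no letter is immediately followed by its inverse. -/
def Reduced {S : Type} (w : Word S) : Prop := w.Chain' fun a b => b ≠ (a.1, !a.2)

/-- A word is cyclically reduced if all of its cyclic shifts are reduced. -/
def CyclicallyReduced {S : Type} (w : Word S) : Prop := ∀ n, Reduced (w.rotate n)

/-- `R̄`: the set of all cyclic shifts of elements of `R` and of their inverses. -/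
def cyclicClosure {S : Type} (R : Set (Word S)) : Set (Word S) :=
  {w | ∃ r ∈ R, ∃ n, w = r.rotate n ∨ w = (wInv r).rotate n}

/-- `p` is a piece with respect to `R` if it is a prefix of two distinct elements
of `R̄`. -/
def IsPiece {S : Type} (R : Set (Word S)) (p : Word S) : Prop :=
  ∃ r₁ ∈ cyclicClosure R, ∃ r₂ ∈ cyclicClosure R, r₁ ≠ r₂ ∧ p <+: r₁ ∧ p <+: r₂

/-- The `C'(λ)` small-cancellation condition: every piece `p` that is a subword of
some `r ∈ R̄` satisfies `|p| < λ|r|`. -/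
def SmallCancellation {S : Type} (R : Set (Word S)) (lam : ℝ) : Prop :=
  ∀ p, IsPiece R p → ∀ r ∈ cyclicClosure R, p <:+: r →
    (p.length : ℝ) < lam * r.length

/-- The element of the presented group `⟨S | R⟩` represented by a word `w`. -/
def toPresented {S : Type} (R : Set (Word S)) (w : Word S) :
    PresentedGroup {g : FreeGroup S | ∃ r ∈ R, g = FreeGroup.mk r} :=
  QuotientGroup.mk (FreeGroup.mk w)

/-- A word `w` is geodesic if every word representing the same element of the
presented group `⟨S | R⟩` is at least as long as `w`. -/
def IsGeodesicWord {S : Type} (R : Set (Word S)) (w : Word S) : Prop :=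
  ∀ v : Word S, toPresented R v = toPresented R w → w.length ≤ v.length

/-- The finite prefix of length `n` of an infinite word `γ`. -/
def rayPrefix {S : Type} (γ : ℕ → S × Bool) (n : ℕ) : Word S := (List.range n).map γ

/-- A geodesic ray: an infinite word all of whose finite prefixes are geodesic. -/
def IsGeodesicRay {S : Type} (R : Set (Word S)) (γ : ℕ → S × Bool) : Prop :=
  ∀ n, IsGeodesicWord R (rayPrefix γ n)

/-- The intersection function of a ray `γ`:
`ρ_γ(t) = max{|w| : w is a subword of some r ∈ R̄ with |r| ≤ t and a subword of γ}`. -/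
noncomputable def intersectionFn {S : Type} (R : Set (Word S)) (γ : ℕ → S × Bool)
    (t : ℕ) : ℕ :=
  sSup {n | ∃ w : Word S, (∃ r ∈ cyclicClosure R, r.length ≤ t ∧ w <:+: r) ∧
    (∃ m, w <:+: rayPrefix γ m) ∧ w.length = n}

/-- A function is sublinear if `ρ(n)/n → 0`. -/
def Sublinear (ρ : ℕ → ℝ) : Prop :=
  Filter.Tendsto (fun n => ρ n / n) Filter.atTop (nhds 0)

/-- A weakly increasing function `f : ℕ → ℝ` is viable if `f(n) ≥ 6` for all `n`
and `f(n) → ∞`. -/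
def Viable (f : ℕ → ℝ) : Prop :=
  Monotone f ∧ (∀ n, 6 ≤ f n) ∧ Filter.Tendsto f Filter.atTop Filter.atTop

/-- The `C'(1/f)` small-cancellation condition for a set of relators: every piece `p`
that is a subword of some `r ∈ R̄` satisfies `|p| < |r|/f(|r|)`. -/
def CPrimeOverF {S : Type} (R : Set (Word S)) (f : ℕ → ℝ) : Prop :=
  ∀ p, IsPiece R p → ∀ r ∈ cyclicClosure R, p <:+: r →
    (p.length : ℝ) < (r.length : ℝ) / f r.length

/-- The pair `(x, R)` satisfies the `C'(1/f)` condition: every word `p` that is a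
subword both of `x` and of some `r ∈ R̄` satisfies `|p| < |r|/f(|r|)`. -/
def PairCPrimeOverF {S : Type} (x : Word S) (R : Set (Word S)) (f : ℕ → ℝ) : Prop :=
  ∀ p, p <:+: x → ∀ r ∈ cyclicClosure R, p <:+: r →
    (p.length : ℝ) < (r.length : ℝ) / f r.length

/-- The increasing partial small-cancellation condition (IPSC). -/
def IPSC {S : Type} (R : Set (Word S)) : Prop :=
  ∀ n : ℕ → ℕ, (∀ i, 0 < n i) → ∃ f : ℕ → ℝ, Viable f ∧
    ∀ K : ℕ, ∃ i, K ≤ i ∧ ∃ x y : Word S, x ++ y ∈ cyclicClosure R ∧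
      n i ≤ (x ++ y).length ∧ ((x ++ y).length : ℝ) / i ≤ x.length ∧
      PairCPrimeOverF x R f

end SmallCancel

namespace SmallCancel

/-- A word `w` of length `n` (with letters in `S`) is non-periodic if the `2n` words
obtained as cyclic shifts of `w` and of `w⁻¹` are pairwise distinct. -/
def NonPeriodic {S : Type} (w : Word S) : Prop :=
  Function.Injective fun p : Fin w.length × Bool =>
    if p.2 then w.rotate p.1 else (wInv w).rotate p.1

/-- The data of the Section-4 construction: an integer `N ≥ 28`, a positive multiple
`L` of `N`, and three distinct non-periodic positive words `r_1¹, r_2¹, r_3¹` of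
length `L` over `S` (indexed by `ZMod 3`, with the paper's index `i ∈ {1,2,3}` taken
modulo 3) satisfying the `C'(1/(4N))` small-cancellation condition, each given as the
concatenation of `N` blocks `y_(i,l)¹` of length `L/N`. -/
structure Section4Data (S : Type) where
  /-- the parameter `N ≥ 28` -/
  N : ℕ
  hN : 28 ≤ N
  /-- the length `L`, a positive multiple of `N` -/
  L : ℕ
  hdvd : N ∣ L
  hLpos : 0 < L
  /-- the blocks `y_(i,l)¹`, so that `r_i¹ = y_(i,1)¹ ⋯ y_(i,N)¹` -/
  y1 : ZMod 3 → Fin N → Word S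
  hlen : ∀ i l, (y1 i l).length = L / N
  /-- the level-1 relators use only letters of `S` (no inverse letters) -/
  hletters : ∀ i l, ∀ a ∈ y1 i l, a.2 = true
  /-- the three level-1 relators are pairwise distinct -/
  hdistinct : Function.Injective fun i : ZMod 3 => (List.ofFn fun l => y1 i l).flatten
  /-- the three level-1 relators are non-periodic -/
  hnonper : ∀ i : ZMod 3, NonPeriodic ((List.ofFn fun l => y1 i l).flatten)
  /-- the level-1 relators satisfy the `C'(1/(4N))` condition -/
  hsc : SmallCancellation
    {w | ∃ i : ZMod 3, w = (List.ofFn fun l => y1 i l).flatten} (1 / (4 * N))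

namespace Section4Data

variable {S : Type}

/-- The words `y_(i,l)^k` of the Section-4 construction, defined for levels `k ≥ 1`
by `y_(i,l)^{k+1} = ∏_{j=1}^{N} (y_(i,j)^k · y_(i+1,l)^k)` (the value at `k = 0` is
irrelevant and set to `y1`). -/
def y (D : Section4Data S) : ℕ → ZMod 3 → Fin D.N → Word S
  | 0 => D.y1
  | 1 => D.y1
  | (k + 2) => fun i l =>
      (List.ofFn fun j : Fin D.N => D.y (k + 1) i j ++ D.y (k + 1) (i + 1) l).flatten

/-- The relators `r_i^k = ∏_{j=1}^{N} y_(i,j)^k` (for `k = 1` this agrees with the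
given level-1 relators). -/
def r (D : Section4Data S) (k : ℕ) (i : ZMod 3) : Word S :=
  (List.ofFn fun j : Fin D.N => D.y k i j).flatten

/-- The set of relators `R = {r_i^k : 1 ≤ i ≤ 3, k ≥ 1}` of the Section-4
construction. -/
def R (D : Section4Data S) : Set (Word S) :=
  {w | ∃ k, 1 ≤ k ∧ ∃ i : ZMod 3, w = D.r k i}

end Section4Data

end SmallCancel

open SmallCancel Section4Data

namespace SmallCancelAux

def No3 (F : List (ZMod 3)) : Prop :=
  ∀ (j : ℕ) (a : ZMod 3), F[j]? = some a → F[j+1]? = some a → F[j+2]? ≠ some a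

def GoodF (a b : ZMod 3) (F : List (ZMod 3)) : Prop :=
  2 ≤ F.length ∧ F[0]? = some a ∧ F[1]? = some (a+1) ∧
  F[F.length - 2]? = some (b - 1) ∧ F[F.length - 1]? = some b ∧ No3 F

lemma zmod3_sub_one_ne (b : ZMod 3) : b - 1 ≠ b := by
  intro h
  have : (1 : ZMod 3) = 0 := by
    have := sub_eq_self.mp h
    exact this
  exact one_ne_zero this

lemma zmod3_ne_add_one (a : ZMod 3) : a ≠ a + 1 := by
  intro h
  have : (1 : ZMod 3) = 0 := (left_eq_add.mp h)
  exact one_ne_zero this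

lemma GoodF.append {a b c e : ZMod 3} {A B : List (ZMod 3)}
    (hA : GoodF a b A) (hB : GoodF c e B) : GoodF a e (A ++ B) := by
  obtain ⟨hA2, hA0, hA1, hAp, hAl, hA3⟩ := hA
  obtain ⟨hB2, hB0, hB1, hBp, hBl, hB3⟩ := hB
  have hlen : (A ++ B).length = A.length + B.length := by simp
  refine ⟨by omega, ?_, ?_, ?_, ?_, ?_⟩
  · rw [List.getElem?_append_left (by omega)]; exact hA0
  · rw [List.getElem?_append_left (by omega)]; exact hA1
  · rw [hlen, List.getElem?_append_right (by omega)]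
    have : A.length + B.length - 2 - A.length = B.length - 2 := by omega
    rw [this]; exact hBp
  · rw [hlen, List.getElem?_append_right (by omega)]
    have : A.length + B.length - 1 - A.length = B.length - 1 := by omega
    rw [this]; exact hBl
  · intro j x h0 h1 h2
    rcases lt_or_ge (j+2) A.length with h | h
    · rw [List.getElem?_append_left (by omega)] at h0 h1 h2
      exact hA3 j x h0 h1 h2
    rcases lt_or_ge j A.length with h' | h'
    · rcases lt_or_ge (j+1) A.length with h'' | h''
      · -- j = A.length - 2 : contradiction from b-1 = b
        rw [List.getElem?_append_left h''] at h1
        rw [List.getElem?_append_left (by omega)] at h0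
        have e0 : j = A.length - 2 := by omega
        have e1 : j + 1 = A.length - 1 := by omega
        rw [e0, hAp] at h0
        rw [e1, hAl] at h1
        have hb : b - 1 = b := by
          have u0 := Option.some.inj h0
          have u1 := Option.some.inj h1
          rw [u0, u1]
        exact absurd hb (zmod3_sub_one_ne b)
      · -- j = A.length - 1, j+1 in B at 0, j+2 in B at 1
        rw [List.getElem?_append_left h'] at h0
        rw [List.getElem?_append_right (by omega)] at h1 h2
        have e1 : j + 1 - A.length = 0 := by omega
        have e2 : j + 2 - A.length = 1 := by omega
        rw [e1, hB0] at h1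
        rw [e2, hB1] at h2
        have u1 := Option.some.inj h1
        have u2 := Option.some.inj h2
        rw [← u1] at u2
        exact zmod3_ne_add_one c u2.symm
    · rw [List.getElem?_append_right (by omega)] at h0 h1 h2
      have e0 : j + 1 - A.length = j - A.length + 1 := by omega
      have e1 : j + 2 - A.length = j - A.length + 2 := by omega
      rw [e0] at h1
      rw [e1] at h2
      exact hB3 (j - A.length) x h0 h1 h2

lemma GoodF.flatten {a b : ZMod 3} : ∀ {Bs : List (List (ZMod 3))}, Bs ≠ [] →
    (∀ F ∈ Bs, GoodF a b F) → GoodF a b Bs.flatten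
  | [], h, _ => absurd rfl h
  | [F], _, hall => by simpa using hall F (by simp)
  | F :: G :: rest, _, hall => by
      rw [List.flatten_cons]
      exact (hall F (by simp)).append
        (GoodF.flatten (by simp) (fun F' hF' => hall F' (List.mem_cons_of_mem _ hF')))

def decL (N : ℕ) : ℕ → ZMod 3 → Fin N → List (ZMod 3 × Fin N)
  | 0, i, l => [(i, l)]
  | (d+1), i, l => (List.ofFn fun j : Fin N => decL N d i j ++ decL N d (i+1) l).flatten

lemma goodF_pair (i : ZMod 3) : GoodF i (i + 1) [i, i + 1] := by
  refine ⟨by simp, by simp, by simp, by simp, by simp, ?_⟩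
  intro j x h0 h1
  have : ([i, i+1] : List (ZMod 3))[j+2]? = none := by
    apply List.getElem?_eq_none
    simp
  rw [this]
  simp

lemma goodF_decL {N : ℕ} (hN : 0 < N) : ∀ (d : ℕ) (i : ZMod 3) (l : Fin N),
    GoodF i (i + ((d + 1 : ℕ) : ZMod 3)) ((decL N (d+1) i l).map Prod.fst)
  | 0, i, l => by
      rw [decL, List.map_flatten, List.map_ofFn]
      apply GoodF.flatten
      · intro h
        apply_fun List.length at h
        simp at h
        omega
      · intro F hF
        obtain ⟨j, rfl⟩ := List.mem_ofFn.mp hF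
        have : ((decL N 0 i j ++ decL N 0 (i+1) l).map Prod.fst) = [i, i+1] := by
          simp [decL]
        simp only [Function.comp_apply]
        rw [this]
        have hcast : ((0 + 1 : ℕ) : ZMod 3) = 1 := by norm_num
        rw [hcast]
        exact goodF_pair i
  | (d+1), i, l => by
      rw [decL, List.map_flatten, List.map_ofFn]
      apply GoodF.flatten
      · intro h
        apply_fun List.length at h
        simp at h
        omega
      · intro F hF
        obtain ⟨j, rfl⟩ := List.mem_ofFn.mp hF
        simp only [Function.comp_apply, List.map_append]
        have h1 := goodF_decL hN d i j
        have h2 := goodF_decL hN d (i+1) l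
        have heq : i + ((d + 1 + 1 : ℕ) : ZMod 3) = (i + 1) + ((d + 1 : ℕ) : ZMod 3) := by
          push_cast
          ring
        rw [heq]
        exact h1.append h2

end SmallCancelAux

namespace SmallCancelAux

open SmallCancel Section4Data

lemma flatten_map_flatten {α β : Type*} (f : α → List β) :
    ∀ (B : List (List α)), ((B.flatten.map f).flatten : List β)
      = (B.map fun b => (b.map f).flatten).flatten
  | [] => by simp
  | b :: B => by
      simp only [List.flatten_cons, List.map_append, List.flatten_append,
        List.map_cons, flatten_map_flatten f B]

lemma y_eq_decL {S : Type} (D : Section4Data S) (k'' : ℕ) :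
    ∀ (d : ℕ) (i : ZMod 3) (l : Fin D.N),
    D.y (k'' + 1 + d) i l
      = ((decL D.N d i l).map fun p => D.y (k'' + 1) p.1 p.2).flatten := by
  intro d
  induction d with
  | zero => intro i l; simp [decL]
  | succ d ih =>
      intro i l
      have e : k'' + 1 + (d + 1) = (k'' + d) + 2 := by omega
      rw [e]
      show (List.ofFn fun j : Fin D.N =>
        D.y (k'' + d + 1) i j ++ D.y (k'' + d + 1) (i + 1) l).flatten = _
      have e2 : k'' + d + 1 = k'' + 1 + d := by omega
      rw [e2, decL, flatten_map_flatten, List.map_ofFn]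
      refine congrArg _ (congrArg _ (funext fun j => ?_))
      simp only [Function.comp_apply, List.map_append, List.flatten_append]
      rw [ih i j, ih (i + 1) l]

end SmallCancelAux

open SmallCancelAux

/-- Lemma 4.3 of the paper. In the Section-4 construction, for all
`1 ≤ k′ < k`, every word `y_(i,l)^k` can be written as a concatenation
`∏_{j=1}^m y_(i_j,l_j)^{k′}` with `m ≥ 2` such that (1) `i_1 ≠ i_2` and
`i_{m-1} ≠ i_m`, and (2) whenever `i_j = i_{j+1}`, the neighbouring indices satisfy
`i_{j-1} ≠ i_j` and `i_{j+2} ≠ i_{j+1}`. (Indices are 0-based here.) -/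
theorem section4_y_decomposition {S : Type} (D : Section4Data S) :
    ∀ k' k : ℕ, 1 ≤ k' → k' < k → ∀ (i : ZMod 3) (l : Fin D.N),
      ∃ m, 2 ≤ m ∧ ∃ idx : ℕ → ZMod 3 × Fin D.N,
        D.y k i l =
          ((List.range m).map fun j => D.y k' (idx j).1 (idx j).2).flatten ∧
        ((idx 0).1 ≠ (idx 1).1 ∧ (idx (m - 2)).1 ≠ (idx (m - 1)).1) ∧
        (∀ j, j + 1 < m → (idx j).1 = (idx (j + 1)).1 →
          (1 ≤ j → (idx (j - 1)).1 ≠ (idx j).1) ∧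
          (j + 2 < m → (idx (j + 2)).1 ≠ (idx (j + 1)).1)) := by
  intro k' k hk' hkk i l
  have hNpos : 0 < D.N := by have := D.hN; omega
  obtain ⟨k'', rfl⟩ : ∃ k'', k' = k'' + 1 := ⟨k' - 1, by omega⟩
  obtain ⟨e, rfl⟩ : ∃ e, k = (k'' + 1) + (e + 1) := ⟨k - k'' - 2, by omega⟩
  set d := e + 1 with hd
  set L := decL D.N d i l with hL
  set dflt : ZMod 3 × Fin D.N := (i, ⟨0, hNpos⟩) with hdflt
  set idx : ℕ → ZMod 3 × Fin D.N := fun j => L.getD j dflt with hidxdef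
  set F := L.map Prod.fst with hF
  have hG : GoodF i (i + ((d : ℕ) : ZMod 3)) F := goodF_decL hNpos e i l
  obtain ⟨hG2, hG0, hG1, hGp, hGl, hG3⟩ := hG
  have hlenF : F.length = L.length := by simp [hF]
  set m := L.length with hm
  have hm2 : 2 ≤ m := by omega
  have hidx : ∀ j, j < m → F[j]? = some (idx j).1 := by
    intro j hj
    have hjF : j < F.length := by omega
    rw [List.getElem?_eq_getElem hjF]
    have : F[j] = (L[j]'hj).1 := by simp [hF]
    rw [this, hidxdef]
    simp only []
    rw [List.getD_eq_getElem L dflt hj]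
  refine ⟨m, hm2, idx, ?_, ⟨?_, ?_⟩, ?_⟩
  · rw [y_eq_decL D k'' d i l]
    congr 1
    apply List.ext_getElem
    · simp [hm, hL]
    · intro n h1 h2
      simp only [List.getElem_map, List.getElem_range]
      have hn : n < m := by simpa using h2
      rw [hidxdef]
      simp only []
      rw [List.getD_eq_getElem L dflt hn]
  · have h0 := hidx 0 (by omega)
    have h1 := hidx 1 (by omega)
    rw [hG0] at h0
    rw [hG1] at h1
    rw [← Option.some.inj h0, ← Option.some.inj h1]
    exact zmod3_ne_add_one i
  · have h0 := hidx (m - 2) (by omega)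
    have h1 := hidx (m - 1) (by omega)
    rw [hlenF] at hGp hGl
    rw [hGp] at h0
    rw [hGl] at h1
    rw [← Option.some.inj h0, ← Option.some.inj h1]
    exact zmod3_sub_one_ne _
  · intro j hj heq
    constructor
    · intro h1j hc
      have a0 := hidx (j - 1) (by omega)
      have a1 := hidx j (by omega)
      have a2 := hidx (j + 1) (by omega)
      rw [hc] at a0
      have e1 : j = (j - 1) + 1 := by omega
      have e2 : j + 1 = (j - 1) + 2 := by omega
      have a1' : F[j - 1 + 1]? = some (idx j).1 := by rw [← e1]; exact a1
      have a2' : F[j - 1 + 2]? = some (idx j).1 := by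
        rw [← e2, heq]; exact a2
      exact hG3 (j - 1) (idx j).1 a0 a1' a2'
    · intro h2j hc
      have a0 := hidx j (by omega)
      have a1 := hidx (j + 1) (by omega)
      have a2 := hidx (j + 2) (by omega)
      rw [← heq] at a1
      rw [hc, ← heq] at a2
      exact hG3 j (idx j).1 a0 a1 a2
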